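/- Let R be a commutative noetherian ring, let G and M be finitely generated R-modules with M in the extension closure ext(G), and let n be a nonnegative integer. Then the n-th syzygy of M belongs to the extension closure ext(R ⊕ Ω^n G), where Ω^n denotes the n-th syzygy. -/

import Mathlib

/-- The extension closure `ext G`. -/
inductive ExtClosure.{u_1, u_2} (R : Type) [CommRing R] (G : ModuleCat.{u_1} R) : ModuleCat.{u_1} R → Prop
  | base : ExtClosure R G G
  | summand {M : ModuleCat R} (N : ModuleCat R) (N' : ModuleCat.{u_2} R) (e : M ≃ₗ[R] N × N') :
      ExtClosure R G M → ExtClosure R G N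
  | extension {L M N : ModuleCat R} (f : L →ₗ[R] M) (g : M →ₗ[R] N)
      (hf : Function.Injective f) (hg : Function.Surjective g) (hfg : Function.Exact f g) :
      ExtClosure R G L → ExtClosure R G N → ExtClosure R G M

/-- `IsSyzygy R n S M` means that `S` is an `n`-th syzygy of `M`: there is an exact
sequence `0 → S → P_{n-1} → ⋯ → P_0 → M → 0` with each `P_i` finitely generated
projective. -/
def IsSyzygy (R : Type) [CommRing R] : ℕ → ModuleCat R → ModuleCat R → Prop
  | 0, S, M => Nonempty (S ≃ₗ[R] M)
  | n + 1, S, M => ∃ (P : ModuleCat R) (f : P →ₗ[R] M),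
      Module.Finite R P ∧ Module.Projective R P ∧ Function.Surjective f ∧
      IsSyzygy R n S (ModuleCat.of R (LinearMap.ker f))

open LinearMap Function

universe u u' v v' w w' x y

section TypeHelpers
variable {R : Type} [CommRing R]

lemma isSyzygy_zero_iff {S : ModuleCat.{u} R} {M : ModuleCat.{v} R} :
    IsSyzygy R 0 S M ↔ Nonempty (S ≃ₗ[R] M) := Iff.rfl

lemma isSyzygy_succ_iff {n : ℕ} {S : ModuleCat.{u} R} {M : ModuleCat.{v} R} :
    IsSyzygy R (n + 1) S M ↔ ∃ (P : ModuleCat.{v} R) (f : P →ₗ[R] M),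
      Module.Finite R P ∧ Module.Projective R P ∧ Function.Surjective f ∧
      IsSyzygy R n S (ModuleCat.of R (LinearMap.ker f)) := Iff.rfl

lemma prodPUnitEquiv (M : Type u) [AddCommGroup M] [Module R M] :
    Nonempty (M ≃ₗ[R] M × PUnit.{v+1}) :=
  ⟨{ toFun := fun x => (x, PUnit.unit), invFun := Prod.fst,
     map_add' := fun _ _ => rfl, map_smul' := fun _ _ => rfl,
     left_inv := fun _ => rfl, right_inv := fun ⟨_, ⟨⟩⟩ => rfl }⟩

lemma punitProdEquiv (M : Type u) [AddCommGroup M] [Module R M] :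
    Nonempty (M ≃ₗ[R] PUnit.{v+1} × M) :=
  ⟨{ toFun := fun x => (PUnit.unit, x), invFun := Prod.snd,
     map_add' := fun _ _ => rfl, map_smul' := fun _ _ => rfl,
     left_inv := fun _ => rfl, right_inv := fun ⟨⟨⟩, _⟩ => rfl }⟩

/-- splitting of a surjection onto a projective module -/
lemma split_nonempty {M : Type u} {N : Type v} [AddCommGroup M] [Module R M]
    [AddCommGroup N] [Module R N] [Module.Projective R N]
    (f : M →ₗ[R] N) (hf : Function.Surjective f) :
    Nonempty (M ≃ₗ[R] N × LinearMap.ker f) := by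
  obtain ⟨s, hs⟩ := Module.projective_lifting_property f LinearMap.id hf
  have hs' : ∀ y, f (s y) = y := fun y => LinearMap.congr_fun hs y
  refine ⟨{ toFun := fun x => (f x, ⟨x - s (f x), by simp [LinearMap.mem_ker, hs']⟩),
            invFun := fun p => s p.1 + p.2.1,
            map_add' := ?_, map_smul' := ?_, left_inv := ?_, right_inv := ?_ }⟩
  · intro x y
    refine Prod.ext (by simp) (Subtype.ext
      (show x + y - s (f (x + y)) = (x - s (f x)) + (y - s (f y)) from by
        simp only [map_add]; abel))
  · intro c x
    refine Prod.ext (by simp) (Subtype.ext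
      (show c • x - s (f (c • x)) = c • (x - s (f x)) from by
        simp only [map_smul, smul_sub]))
  · intro x; simp
  · rintro ⟨n, y⟩
    have hy : f y.1 = 0 := y.2
    refine Prod.ext (by simp [hs', hy]) (Subtype.ext ?_)
    simp [hs', hy]

lemma kerProdEquiv {A : Type u} {B : Type v} {C : Type w} {D : Type x}
    [AddCommGroup A] [Module R A] [AddCommGroup B] [Module R B]
    [AddCommGroup C] [Module R C] [AddCommGroup D] [Module R D]
    (f : A →ₗ[R] B) (g : C →ₗ[R] D) :
    Nonempty (↥(LinearMap.ker (f.prodMap g)) ≃ₗ[R] ↥(LinearMap.ker f) × ↥(LinearMap.ker g)) := by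
  refine ⟨{ toFun := fun z => (⟨z.1.1, ?_⟩, ⟨z.1.2, ?_⟩),
            invFun := fun p => ⟨(p.1.1, p.2.1), ?_⟩,
            map_add' := fun _ _ => rfl, map_smul' := fun _ _ => rfl,
            left_inv := fun _ => rfl, right_inv := fun _ => rfl }⟩
  · have := z.2
    rw [LinearMap.mem_ker] at this ⊢
    exact congrArg Prod.fst this
  · have := z.2
    rw [LinearMap.mem_ker] at this ⊢
    exact congrArg Prod.snd this
  · rw [LinearMap.mem_ker]
    exact Prod.ext p.1.2 p.2.2

lemma kerFstEquiv (M : Type u) (N : Type v) [AddCommGroup M] [Module R M]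
    [AddCommGroup N] [Module R N] :
    Nonempty (↥(LinearMap.ker (LinearMap.fst R M N)) ≃ₗ[R] N) := by
  refine ⟨{ toFun := fun z => z.1.2,
            invFun := fun y => ⟨(0, y), rfl⟩,
            map_add' := fun _ _ => rfl, map_smul' := fun _ _ => rfl,
            left_inv := ?_, right_inv := fun _ => rfl }⟩
  rintro ⟨⟨a, b⟩, hz⟩
  have : a = 0 := hz
  subst this
  rfl

/-- kernel is invariant under conjugation by equivalences -/
lemma kerConjEquiv {A : Type u} {B : Type v} {A' : Type w} {B' : Type x}
    [AddCommGroup A] [Module R A] [AddCommGroup B] [Module R B]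
    [AddCommGroup A'] [Module R A'] [AddCommGroup B'] [Module R B']
    (f : A →ₗ[R] B) (d : A' ≃ₗ[R] A) (e : B ≃ₗ[R] B') :
    Nonempty (↥(LinearMap.ker ((e.toLinearMap ∘ₗ f) ∘ₗ d.toLinearMap)) ≃ₗ[R] ↥(LinearMap.ker f)) := by
  have mem : ∀ z : A', z ∈ LinearMap.ker ((e.toLinearMap ∘ₗ f) ∘ₗ d.toLinearMap) ↔ d z ∈ LinearMap.ker f := by
    intro z
    simp [LinearMap.mem_ker]
  refine ⟨{ toFun := fun z => ⟨d z.1, (mem z.1).mp z.2⟩,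
            invFun := fun z => ⟨d.symm z.1, (mem _).mpr (by simpa using z.2)⟩,
            map_add' := fun a b => Subtype.ext (by simp),
            map_smul' := fun c a => Subtype.ext (by simp),
            left_inv := fun z => Subtype.ext (by simp),
            right_inv := fun z => Subtype.ext (by simp) }⟩

/-- a finitely generated module has an isomorphic copy in any universe -/
lemma exists_copy (M : Type v) [AddCommGroup M] [Module R M] [Module.Finite R M] :
    ∃ N : ModuleCat.{w} R, Nonempty (M ≃ₗ[R] N) := by
  obtain ⟨k, f, hf⟩ := Module.Finite.exists_fin' R M
  exact ⟨ModuleCat.of R (ULift.{w} ((Fin k → R) ⧸ LinearMap.ker f)),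
    ⟨(f.quotKerEquivOfSurjective hf).symm.trans ULift.moduleEquiv.symm⟩⟩

lemma exact_conj {A : Type u} {B : Type v} {C : Type w} {A' : Type u'} {B' : Type v'} {C' : Type w'}
    [AddCommGroup A] [Module R A] [AddCommGroup B] [Module R B] [AddCommGroup C] [Module R C]
    [AddCommGroup A'] [Module R A'] [AddCommGroup B'] [Module R B'] [AddCommGroup C'] [Module R C']
    (f : A →ₗ[R] B) (g : B →ₗ[R] C) (eA : A ≃ₗ[R] A') (eB : B ≃ₗ[R] B') (eC : C ≃ₗ[R] C')
    (hf : Function.Injective f) (hg : Function.Surjective g) (hfg : Function.Exact f g) :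
    Function.Injective ((eB.toLinearMap ∘ₗ f) ∘ₗ eA.symm.toLinearMap) ∧
    Function.Surjective ((eC.toLinearMap ∘ₗ g) ∘ₗ eB.symm.toLinearMap) ∧
    Function.Exact ((eB.toLinearMap ∘ₗ f) ∘ₗ eA.symm.toLinearMap)
      ((eC.toLinearMap ∘ₗ g) ∘ₗ eB.symm.toLinearMap) := by
  refine ⟨?_, ?_, ?_⟩
  · intro a b hab
    simp only [LinearMap.comp_apply, LinearEquiv.coe_coe] at hab
    have := hf (eB.injective hab)
    exact eA.symm.injective this
  · intro c
    obtain ⟨b, hb⟩ := hg (eC.symm c)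
    exact ⟨eB b, by simp [hb]⟩
  · intro b'
    constructor
    · intro hb
      simp only [LinearMap.comp_apply, LinearEquiv.coe_coe] at hb
      have h0 : g (eB.symm b') = 0 := by
        have := congrArg eC.symm hb
        simpa using this
      obtain ⟨a, ha⟩ := (hfg _).mp h0
      exact ⟨eA a, by simp [ha]⟩
    · rintro ⟨a, rfl⟩
      simp only [LinearMap.comp_apply, LinearEquiv.coe_coe, LinearEquiv.symm_apply_apply]
      rw [hfg.apply_apply_eq_zero]
      simp

end TypeHelpers

section Closure
variable {R : Type} [CommRing R] {G : ModuleCat.{u} R}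

lemma ExtClosure.summand_fg {M N : ModuleCat.{u} R} {N'' : Type v} [AddCommGroup N'']
    [Module R N''] (hfin : Module.Finite R N'') (e : M ≃ₗ[R] N × N'')
    (h : ExtClosure.{u, u'} R G M) : ExtClosure.{u, u'} R G N := by
  haveI := hfin
  obtain ⟨C, ⟨e'⟩⟩ := exists_copy.{v, u'} (R := R) N''
  exact ExtClosure.summand N C (e.trans (LinearEquiv.prodCongr (LinearEquiv.refl R N) e')) h

lemma ExtClosure.of_iso {M : ModuleCat.{u} R} (h : ExtClosure.{u, u'} R G M)
    {N : ModuleCat.{u} R} (e : M ≃ₗ[R] N) : ExtClosure.{u, u'} R G N := by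
  obtain ⟨e'⟩ := prodPUnitEquiv.{u, u'} (R := R) (N : Type u)
  exact ExtClosure.summand_fg inferInstance (e.trans e') h

lemma ExtClosure.prod {A B : ModuleCat.{u} R} (hA : ExtClosure.{u, u'} R G A)
    (hB : ExtClosure.{u, u'} R G B) :
    ExtClosure.{u, u'} R G (ModuleCat.of R (A × B)) :=
  ExtClosure.extension (LinearMap.inl R A B) (LinearMap.snd R A B)
    LinearMap.inl_injective (fun b => ⟨(0, b), rfl⟩) Function.Exact.inl_snd hA hB

lemma finite_of_exact {L M N : Type*} [AddCommGroup L] [Module R L] [AddCommGroup M]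
    [Module R M] [AddCommGroup N] [Module R N] (f : L →ₗ[R] M) (g : M →ₗ[R] N)
    (hg : Function.Surjective g) (hfg : Function.Exact f g)
    (h1 : Module.Finite R L) (h2 : Module.Finite R N) : Module.Finite R M := by
  rw [Module.finite_def]
  apply Submodule.fg_of_fg_map_of_fg_inf_ker g
  · rw [Submodule.map_top, LinearMap.range_eq_top.mpr hg]
    exact Module.finite_def.mp h2
  · rw [top_inf_eq, LinearMap.exact_iff.mp hfg, LinearMap.range_eq_map]
    exact (Module.finite_def.mp h1).map f

lemma ExtClosure.finite {M : ModuleCat.{u} R} (h : ExtClosure.{u, u'} R G M)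
    (hG : Module.Finite R G) : Module.Finite R M := by
  induction h with
  | base => exact hG
  | summand N N' e _ ih =>
      haveI := ih
      exact Module.Finite.of_surjective ((LinearMap.fst R N N') ∘ₗ e.toLinearMap)
        (by rw [LinearMap.coe_comp, LinearEquiv.coe_coe]; exact (Prod.fst_surjective).comp e.surjective)
  | extension f g hf hg hfg hL hN ihL ihN =>
      exact finite_of_exact f g hg hfg ihL ihN

variable (SG : ModuleCat.{u} R)

lemma closure_R (hSGfin : Module.Finite R SG) :
    ExtClosure.{u, u'} R (ModuleCat.of R (R × SG)) (ModuleCat.of R (ULift.{u} R)) := by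
  refine ExtClosure.summand_fg (N'' := (SG : Type u)) hSGfin ?_ ExtClosure.base
  exact LinearEquiv.prodCongr ULift.moduleEquiv.symm (LinearEquiv.refl R SG)

lemma closure_SG : ExtClosure.{u, u'} R (ModuleCat.of R (R × SG)) SG :=
  ExtClosure.summand_fg (N'' := R) inferInstance (LinearEquiv.prodComm R R SG) ExtClosure.base

lemma closure_punit (hSGfin : Module.Finite R SG) :
    ExtClosure.{u, u'} R (ModuleCat.of R (R × SG)) (ModuleCat.of R PUnit.{u+1}) := by
  obtain ⟨e⟩ := punitProdEquiv.{u, u} (R := R) (R × SG : Type u)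
  haveI := hSGfin
  exact ExtClosure.summand_fg (N'' := ((R × SG) : Type u)) inferInstance e ExtClosure.base

lemma finConsEquiv (k : ℕ) :
    Nonempty ((R × (Fin k → R)) ≃ₗ[R] (Fin (k + 1) → R)) :=
  ⟨{ toFun := fun p => Fin.cons p.1 p.2,
     invFun := fun v => (v 0, v ∘ Fin.succ),
     map_add' := by
       intro p q
       funext i
       refine Fin.cases ?_ (fun j => ?_) i <;> simp
     map_smul' := by
       intro c p
       funext i
       refine Fin.cases ?_ (fun j => ?_) i <;> simp
     left_inv := by
       intro p
       refine Prod.ext (by simp) ?_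
       funext j
       simp
     right_inv := by
       intro v
       funext i
       refine Fin.cases ?_ (fun j => ?_) i <;> simp }⟩

lemma closure_free (hSGfin : Module.Finite R SG) (k : ℕ) :
    ExtClosure.{u, u'} R (ModuleCat.of R (R × SG))
      (ModuleCat.of R (ULift.{u} (Fin k → R))) := by
  induction k with
  | zero =>
      exact (closure_punit SG hSGfin).of_iso
        (LinearEquiv.ofSubsingleton (R := R) PUnit.{u+1} (ULift.{u} (Fin 0 → R)))
  | succ k ih =>
      obtain ⟨e⟩ := finConsEquiv (R := R) k
      have e2 : ((ModuleCat.of R (ULift.{u} R) : Type u) × (ModuleCat.of R (ULift.{u} (Fin k → R)) : Type u))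
          ≃ₗ[R] ULift.{u} (Fin (k + 1) → R) :=
        (LinearEquiv.prodCongr ULift.moduleEquiv ULift.moduleEquiv).trans
          (e.trans ULift.moduleEquiv.symm)
      exact ((closure_R SG hSGfin).prod ih).of_iso e2

lemma closure_projective [IsNoetherianRing R] (hSGfin : Module.Finite R SG)
    (P : ModuleCat.{u} R) (h1 : Module.Finite R P) (h2 : Module.Projective R P) :
    ExtClosure.{u, u'} R (ModuleCat.of R (R × SG)) P := by
  haveI := h1; haveI := h2
  obtain ⟨k, f0, hf0⟩ := Module.Finite.exists_fin' R P
  set f : ULift.{u} (Fin k → R) →ₗ[R] P := f0 ∘ₗ ULift.moduleEquiv.toLinearMap with hfdef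
  have hf : Function.Surjective f := by
    rw [hfdef]
    exact hf0.comp ULift.moduleEquiv.surjective
  obtain ⟨e⟩ := split_nonempty f hf
  haveI : Module.Finite R ↥(LinearMap.ker f) := inferInstance
  exact ExtClosure.summand_fg (N'' := ↥(LinearMap.ker f)) inferInstance e
    (closure_free SG hSGfin k)

end Closure

section Syzygy
variable {R : Type} [CommRing R]

lemma IsSyzygy.congr (n : ℕ) : ∀ {S : ModuleCat.{u} R} {S' : ModuleCat.{u'} R}
    {M : ModuleCat.{v} R} {M' : ModuleCat.{v'} R},
    IsSyzygy R n S M → (S ≃ₗ[R] S') → (M ≃ₗ[R] M') → IsSyzygy R n S' M' := by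
  induction n with
  | zero =>
      rintro S S' M M' ⟨e⟩ eS eM
      exact ⟨(eS.symm.trans e).trans eM⟩
  | succ n ih =>
      rintro S S' M M' ⟨P, f, h1, h2, h3, h4⟩ eS eM
      haveI := h1; haveI := h2
      obtain ⟨P', ⟨eP⟩⟩ := exists_copy.{v, v'} (R := R) (P : Type v)
      refine isSyzygy_succ_iff.mpr ⟨P', (eM.toLinearMap ∘ₗ f) ∘ₗ eP.symm.toLinearMap,
        Module.Finite.equiv eP, Module.Projective.of_equiv eP, ?_, ?_⟩
      · exact eM.surjective.comp (h3.comp eP.symm.surjective)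
      · obtain ⟨ek⟩ := kerConjEquiv (R := R) f eP.symm eM
        exact ih h4 eS ek.symm

lemma IsSyzygy.prod (n : ℕ) : ∀ {S : ModuleCat.{u} R} {T : ModuleCat.{u'} R}
    {A : ModuleCat.{v} R} {B : ModuleCat.{v'} R},
    IsSyzygy R n S A → IsSyzygy R n T B →
    IsSyzygy R n (ModuleCat.of R (S × T)) (ModuleCat.of R (A × B)) := by
  induction n with
  | zero =>
      rintro S T A B ⟨e⟩ ⟨e'⟩
      exact ⟨LinearEquiv.prodCongr e e'⟩
  | succ n ih =>
      rintro S T A B ⟨P, f, hP1, hP2, hf, hS⟩ ⟨Q, g, hQ1, hQ2, hg, hT⟩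
      haveI := hP1; haveI := hP2; haveI := hQ1; haveI := hQ2
      refine isSyzygy_succ_iff.mpr ⟨ModuleCat.of R (P × Q), f.prodMap g,
        inferInstanceAs (Module.Finite R (P × Q)),
        inferInstanceAs (Module.Projective R (P × Q)), ?_, ?_⟩
      · exact hf.prodMap hg
      · obtain ⟨ek⟩ := kerProdEquiv f g
        exact IsSyzygy.congr n (ih hS hT) (LinearEquiv.refl R _) ek.symm

lemma IsSyzygy.self (n : ℕ) (P : ModuleCat.{u} R) (h1 : Module.Finite R P)
    (h2 : Module.Projective R P) : IsSyzygy R n P P := by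
  induction n with
  | zero => exact ⟨LinearEquiv.refl R P⟩
  | succ n ih =>
      haveI := h1; haveI := h2
      refine isSyzygy_succ_iff.mpr ⟨ModuleCat.of R (P × P), LinearMap.fst R P P,
        inferInstanceAs (Module.Finite R (P × P)),
        inferInstanceAs (Module.Projective R (P × P)), Prod.fst_surjective, ?_⟩
      obtain ⟨ek⟩ := kerFstEquiv (R := R) (P : Type u) (P : Type u)
      exact IsSyzygy.congr n ih (LinearEquiv.refl R _) ek.symm

lemma IsSyzygy.finite [IsNoetherianRing R] (n : ℕ) : ∀ {S : ModuleCat.{u} R}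
    {M : ModuleCat.{v} R}, IsSyzygy R n S M → Module.Finite R M → Module.Finite R S := by
  induction n with
  | zero =>
      rintro S M ⟨e⟩ hM
      haveI := hM
      exact Module.Finite.equiv e.symm
  | succ n ih =>
      rintro S M ⟨P, f, h1, h2, h3, h4⟩ hM
      haveI := h1
      exact ih h4 (inferInstanceAs (Module.Finite R ↥(LinearMap.ker f)))

lemma syzygy_exists [IsNoetherianRing R] (n : ℕ) : ∀ (M : ModuleCat.{v} R),
    Module.Finite R M → ∃ S : ModuleCat.{u} R, IsSyzygy R n S M ∧ Module.Finite R S := by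
  induction n with
  | zero =>
      intro M hM
      haveI := hM
      obtain ⟨S, ⟨e⟩⟩ := exists_copy.{v, u} (R := R) (M : Type v)
      exact ⟨S, ⟨e.symm⟩, Module.Finite.equiv e⟩
  | succ n ih =>
      intro M hM
      haveI := hM
      obtain ⟨k, f0, hf0⟩ := Module.Finite.exists_fin' R M
      set f : ULift.{v} (Fin k → R) →ₗ[R] M := f0 ∘ₗ ULift.moduleEquiv.toLinearMap with hfdef
      have hf : Function.Surjective f := by
        rw [hfdef]; exact hf0.comp ULift.moduleEquiv.surjective
      haveI : Module.Finite R ↥(LinearMap.ker f) := inferInstance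
      obtain ⟨S, hS, hSfin⟩ := ih (ModuleCat.of R ↥(LinearMap.ker f))
        (inferInstanceAs (Module.Finite R ↥(LinearMap.ker f)))
      exact ⟨S, isSyzygy_succ_iff.mpr ⟨ModuleCat.of R (ULift.{v} (Fin k → R)), f,
        inferInstanceAs (Module.Finite R (ULift.{v} (Fin k → R))),
        Module.Projective.of_equiv ULift.moduleEquiv.symm, hf, hS⟩, hSfin⟩

end Syzygy

section Schanuel
variable {R : Type} [CommRing R]

lemma pullback_side {M : Type v} {M' : Type v'} {P₁ : Type w} {P₂ : Type w'}
    [AddCommGroup M] [Module R M] [AddCommGroup M'] [Module R M']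
    [AddCommGroup P₁] [Module R P₁] [AddCommGroup P₂] [Module R P₂]
    [Module.Projective R P₂]
    (e : M ≃ₗ[R] M') (f₁ : P₁ →ₗ[R] M) (f₂ : P₂ →ₗ[R] M') (h₁ : Function.Surjective f₁) :
    Nonempty (↥(LinearMap.ker (LinearMap.coprod (e.toLinearMap ∘ₗ f₁) (-f₂)))
      ≃ₗ[R] P₂ × ↥(LinearMap.ker f₁)) := by
  set g : P₁ × P₂ →ₗ[R] M' := LinearMap.coprod (e.toLinearMap ∘ₗ f₁) (-f₂) with hg
  have gapp : ∀ z : P₁ × P₂, g z = e (f₁ z.1) + -(f₂ z.2) := by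
    intro z
    simp [hg, LinearMap.coprod_apply]
  let u : ↥(LinearMap.ker g) →ₗ[R] P₂ :=
    (LinearMap.snd R P₁ P₂) ∘ₗ (LinearMap.ker g).subtype
  have uapp : ∀ z : ↥(LinearMap.ker g), u z = z.1.2 := fun _ => rfl
  have hu : Function.Surjective u := by
    intro y
    obtain ⟨x, hx⟩ := h₁ (e.symm (f₂ y))
    refine ⟨⟨(x, y), ?_⟩, rfl⟩
    rw [LinearMap.mem_ker, gapp]
    simp [hx]
  obtain ⟨e1⟩ := split_nonempty u hu
  -- ker u ≃ ker f₁
  have e2 : ↥(LinearMap.ker u) ≃ₗ[R] ↥(LinearMap.ker f₁) := by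
    refine { toFun := fun z => ⟨z.1.1.1, ?_⟩,
             invFun := fun w => ⟨⟨(w.1, 0), ?_⟩, ?_⟩,
             map_add' := fun _ _ => rfl, map_smul' := fun _ _ => rfl,
             left_inv := ?_, right_inv := fun _ => rfl }
    · have h0 : (z.1.1 : P₁ × P₂).2 = 0 := z.2
      have h1 : g z.1.1 = 0 := z.1.2
      rw [gapp, h0] at h1
      simp only [map_zero, neg_zero, add_zero] at h1
      rw [LinearMap.mem_ker]
      exact (LinearEquiv.map_eq_zero_iff e).mp h1
    · rw [LinearMap.mem_ker, gapp]
      have : f₁ w.1 = 0 := w.2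
      simp [this]
    · rw [LinearMap.mem_ker]
      rfl
    · intro z
      refine Subtype.ext (Subtype.ext (Prod.ext rfl ?_))
      exact (show (z.1.1 : P₁ × P₂).2 = 0 from z.2).symm
  exact ⟨e1.trans (LinearEquiv.prodCongr (LinearEquiv.refl R P₂) e2)⟩

lemma ker_swap {M : Type v} {M' : Type v'} {P₁ : Type w} {P₂ : Type w'}
    [AddCommGroup M] [Module R M] [AddCommGroup M'] [Module R M']
    [AddCommGroup P₁] [Module R P₁] [AddCommGroup P₂] [Module R P₂]
    (e : M ≃ₗ[R] M') (f₁ : P₁ →ₗ[R] M) (f₂ : P₂ →ₗ[R] M') :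
    Nonempty (↥(LinearMap.ker (LinearMap.coprod (e.toLinearMap ∘ₗ f₁) (-f₂)))
      ≃ₗ[R] ↥(LinearMap.ker (LinearMap.coprod (e.symm.toLinearMap ∘ₗ f₂) (-f₁)))) := by
  have mem1 : ∀ z : P₁ × P₂,
      z ∈ LinearMap.ker (LinearMap.coprod (e.toLinearMap ∘ₗ f₁) (-f₂)) ↔
        e (f₁ z.1) = f₂ z.2 := by
    intro z
    rw [LinearMap.mem_ker, LinearMap.coprod_apply]
    simp only [LinearMap.comp_apply, LinearEquiv.coe_coe, LinearMap.neg_apply]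
    exact add_neg_eq_zero
  have mem2 : ∀ z : P₂ × P₁,
      z ∈ LinearMap.ker (LinearMap.coprod (e.symm.toLinearMap ∘ₗ f₂) (-f₁)) ↔
        e.symm (f₂ z.1) = f₁ z.2 := by
    intro z
    rw [LinearMap.mem_ker, LinearMap.coprod_apply]
    simp only [LinearMap.comp_apply, LinearEquiv.coe_coe, LinearMap.neg_apply]
    exact add_neg_eq_zero
  refine ⟨{ toFun := fun z => ⟨(z.1.2, z.1.1), ?_⟩,
            invFun := fun z => ⟨(z.1.2, z.1.1), ?_⟩,
            map_add' := fun _ _ => rfl, map_smul' := fun _ _ => rfl,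
            left_inv := fun _ => rfl, right_inv := fun _ => rfl }⟩
  · rw [mem2]
    have := (mem1 z.1).mp z.2
    simp [← this]
  · rw [mem1]
    have := (mem2 z.1).mp z.2
    simp [← this]

lemma schanuel_step {M : Type v} {M' : Type v'} {P₁ : Type w} {P₂ : Type w'}
    [AddCommGroup M] [Module R M] [AddCommGroup M'] [Module R M']
    [AddCommGroup P₁] [Module R P₁] [AddCommGroup P₂] [Module R P₂]
    [Module.Projective R P₁] [Module.Projective R P₂]
    (e : M ≃ₗ[R] M') (f₁ : P₁ →ₗ[R] M) (f₂ : P₂ →ₗ[R] M')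
    (h₁ : Function.Surjective f₁) (h₂ : Function.Surjective f₂) :
    Nonempty ((↥(LinearMap.ker f₁) × P₂) ≃ₗ[R] ↥(LinearMap.ker f₂) × P₁) := by
  obtain ⟨eA⟩ := pullback_side e f₁ f₂ h₁
  obtain ⟨eB⟩ := pullback_side e.symm f₂ f₁ h₂
  obtain ⟨eW⟩ := ker_swap e f₁ f₂
  exact ⟨(((LinearEquiv.prodComm R _ _).trans eA.symm).trans (eW.trans eB)).trans
    (LinearEquiv.prodComm R _ _)⟩

/-- generalized Schanuel lemma, universe-0 core -/
lemma schanuel₀ (n : ℕ) : ∀ {S S' M M' : ModuleCat.{0} R} (e : M ≃ₗ[R] M'),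
    IsSyzygy R n S M → IsSyzygy R n S' M' →
    ∃ P Q : ModuleCat.{0} R,
      (Module.Finite R P ∧ Module.Projective R P) ∧
      (Module.Finite R Q ∧ Module.Projective R Q) ∧
      Nonempty ((S × Q) ≃ₗ[R] S' × P) := by
  induction n with
  | zero =>
      rintro S S' M M' e ⟨eS⟩ ⟨eS'⟩
      refine ⟨ModuleCat.of R PUnit, ModuleCat.of R PUnit,
        ⟨inferInstanceAs (Module.Finite R PUnit), inferInstanceAs (Module.Projective R PUnit)⟩,
        ⟨inferInstanceAs (Module.Finite R PUnit), inferInstanceAs (Module.Projective R PUnit)⟩, ?_⟩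
      obtain ⟨p1⟩ := prodPUnitEquiv (R := R) (S : Type)
      obtain ⟨p2⟩ := prodPUnitEquiv (R := R) (S' : Type)
      exact ⟨p1.symm.trans ((((eS.trans e).trans eS'.symm)).trans p2)⟩
  | succ n ih =>
      rintro S S' M M' e ⟨P₁, f₁, hP₁fin, hP₁proj, hf₁, hS⟩ ⟨P₂, f₂, hP₂fin, hP₂proj, hf₂, hS'⟩
      haveI := hP₁fin; haveI := hP₁proj; haveI := hP₂fin; haveI := hP₂proj
      obtain ⟨e₀⟩ := schanuel_step e f₁ f₂ hf₁ hf₂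
      have hSP₂ : IsSyzygy R n (ModuleCat.of R (S × P₂))
          (ModuleCat.of R (↥(LinearMap.ker f₂) × P₁)) :=
        IsSyzygy.congr n (IsSyzygy.prod n hS (IsSyzygy.self n (ModuleCat.of R (P₂ : Type))
          hP₂fin hP₂proj)) (LinearEquiv.refl R _) e₀
      have hS'P₁ : IsSyzygy R n (ModuleCat.of R (S' × P₁))
          (ModuleCat.of R (↥(LinearMap.ker f₂) × P₁)) :=
        IsSyzygy.prod n hS' (IsSyzygy.self n (ModuleCat.of R (P₁ : Type)) hP₁fin hP₁proj)
      obtain ⟨P, Q, ⟨hPfin, hPproj⟩, ⟨hQfin, hQproj⟩, ⟨eFin⟩⟩ :=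
        ih (LinearEquiv.refl R _) hSP₂ hS'P₁
      haveI := hPfin; haveI := hPproj; haveI := hQfin; haveI := hQproj
      refine ⟨ModuleCat.of R (P₁ × P), ModuleCat.of R (P₂ × Q),
        ⟨inferInstanceAs (Module.Finite R (P₁ × P)),
         inferInstanceAs (Module.Projective R (P₁ × P))⟩,
        ⟨inferInstanceAs (Module.Finite R (P₂ × Q)),
         inferInstanceAs (Module.Projective R (P₂ × Q))⟩, ?_⟩
      -- eFin : (S × P₂) × Q ≃ (S' × P₁) × P
      exact ⟨(LinearEquiv.prodAssoc R S P₂ Q).symm.trans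
        (eFin.trans (LinearEquiv.prodAssoc R S' P₁ P))⟩

/-- generalized Schanuel lemma -/
lemma schanuel [IsNoetherianRing R] (n : ℕ) {S : ModuleCat.{u} R} {S' : ModuleCat.{u'} R}
    {M : ModuleCat.{v} R} {M' : ModuleCat.{v'} R} (e : M ≃ₗ[R] M')
    (h : IsSyzygy R n S M) (h' : IsSyzygy R n S' M')
    (hM : Module.Finite R M) (hM' : Module.Finite R M') :
    ∃ P Q : ModuleCat.{0} R,
      (Module.Finite R P ∧ Module.Projective R P) ∧
      (Module.Finite R Q ∧ Module.Projective R Q) ∧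
      Nonempty ((S × Q) ≃ₗ[R] S' × P) := by
  haveI := hM; haveI := hM'
  haveI hSfin : Module.Finite R S := IsSyzygy.finite n h hM
  haveI hS'fin : Module.Finite R S' := IsSyzygy.finite n h' hM'
  obtain ⟨S₀, ⟨eS⟩⟩ := exists_copy.{u, 0} (R := R) (S : Type u)
  obtain ⟨S'₀, ⟨eS'⟩⟩ := exists_copy.{u', 0} (R := R) (S' : Type u')
  obtain ⟨M₀, ⟨eM⟩⟩ := exists_copy.{v, 0} (R := R) (M : Type v)
  obtain ⟨M'₀, ⟨eM'⟩⟩ := exists_copy.{v', 0} (R := R) (M' : Type v')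
  have h₀ : IsSyzygy R n S₀ M₀ := IsSyzygy.congr n h eS eM
  have h'₀ : IsSyzygy R n S'₀ M'₀ := IsSyzygy.congr n h' eS' eM'
  obtain ⟨P, Q, hP, hQ, ⟨e₀⟩⟩ :=
    schanuel₀ n ((eM.symm.trans e).trans eM') h₀ h'₀
  refine ⟨P, Q, hP, hQ, ?_⟩
  exact ⟨(LinearEquiv.prodCongr eS (LinearEquiv.refl R Q)).trans
    (e₀.trans (LinearEquiv.prodCongr eS'.symm (LinearEquiv.refl R P)))⟩

end Schanuel

section Horseshoe
variable {R : Type} [CommRing R]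

lemma horseshoe [IsNoetherianRing R] (n : ℕ) :
    ∀ (L M N : ModuleCat.{v} R) (f : L →ₗ[R] M) (g : M →ₗ[R] N),
      Function.Injective f → Function.Surjective g → Function.Exact f g →
      Module.Finite R L → Module.Finite R M → Module.Finite R N →
      ∃ (SL S SN : ModuleCat.{u} R) (i : SL →ₗ[R] S) (p : S →ₗ[R] SN),
        Function.Injective i ∧ Function.Surjective p ∧ Function.Exact i p ∧
        IsSyzygy R n SL L ∧ IsSyzygy R n S M ∧ IsSyzygy R n SN N := by
  induction n with
  | zero =>
      intro L M N f g hf hg hfg hL hM hN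
      haveI := hL; haveI := hM; haveI := hN
      obtain ⟨L₀, ⟨eL⟩⟩ := exists_copy.{v, u} (R := R) (L : Type v)
      obtain ⟨M₀, ⟨eM⟩⟩ := exists_copy.{v, u} (R := R) (M : Type v)
      obtain ⟨N₀, ⟨eN⟩⟩ := exists_copy.{v, u} (R := R) (N : Type v)
      obtain ⟨h1, h2, h3⟩ := exact_conj f g eL eM eN hf hg hfg
      exact ⟨L₀, M₀, N₀, _, _, h1, h2, h3, ⟨eL.symm⟩, ⟨eM.symm⟩, ⟨eN.symm⟩⟩
  | succ n ih =>
      intro L M N f g hf hg hfg hL hM hN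
      haveI := hL; haveI := hM; haveI := hN
      obtain ⟨k, p0, hp0⟩ := Module.Finite.exists_fin' R L
      obtain ⟨l, q0, hq0⟩ := Module.Finite.exists_fin' R N
      set p : ULift.{v} (Fin k → R) →ₗ[R] L := p0 ∘ₗ ULift.moduleEquiv.toLinearMap with hpdef
      set q : ULift.{v} (Fin l → R) →ₗ[R] N := q0 ∘ₗ ULift.moduleEquiv.toLinearMap with hqdef
      have hp : Function.Surjective p := by
        rw [hpdef]; exact hp0.comp ULift.moduleEquiv.surjective
      have hq : Function.Surjective q := by
        rw [hqdef]; exact hq0.comp ULift.moduleEquiv.surjective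
      obtain ⟨h, hh⟩ := Module.projective_lifting_property g q hg
      have hh' : ∀ y, g (h y) = q y := fun y => LinearMap.congr_fun hh y
      set A := ULift.{v} (Fin k → R)
      set B := ULift.{v} (Fin l → R)
      set F : A × B →ₗ[R] M := LinearMap.coprod (f ∘ₗ p) h with hFdef
      have Fapp : ∀ z : A × B, F z = f (p z.1) + h z.2 := by
        intro z
        simp [hFdef, LinearMap.coprod_apply]
      have hF : Function.Surjective F := by
        intro m
        obtain ⟨y, hy⟩ := hq (g m)
        have h0 : g (m - h y) = 0 := by
          rw [map_sub, hh', hy, sub_self]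
        obtain ⟨a, ha⟩ := (hfg _).mp h0
        obtain ⟨x, hx⟩ := hp a
        refine ⟨(x, y), ?_⟩
        rw [Fapp]
        simp only
        rw [hx, ha]
        abel
      -- the two kernel maps
      have memF : ∀ z : A × B, z ∈ LinearMap.ker F ↔ f (p z.1) + h z.2 = 0 := by
        intro z
        rw [LinearMap.mem_ker, Fapp]
      set i' : ↥(LinearMap.ker p) →ₗ[R] ↥(LinearMap.ker F) :=
        LinearMap.codRestrict (LinearMap.ker F)
          ((LinearMap.inl R A B) ∘ₗ (LinearMap.ker p).subtype)
          (by
            intro x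
            rw [memF]
            have hx : p x.1 = 0 := x.2
            simp [hx]) with hi'def
      have qsnd : ∀ z : ↥(LinearMap.ker F), q (z.1.2) = 0 := by
        intro z
        have hz : f (p z.1.1) + h z.1.2 = 0 := (memF z.1).mp z.2
        have : h z.1.2 = -(f (p z.1.1)) := by
          rw [eq_neg_iff_add_eq_zero, add_comm]
          exact hz
        rw [← hh', this, map_neg, hfg.apply_apply_eq_zero, neg_zero]
      set p' : ↥(LinearMap.ker F) →ₗ[R] ↥(LinearMap.ker q) :=
        LinearMap.codRestrict (LinearMap.ker q)
          ((LinearMap.snd R A B) ∘ₗ (LinearMap.ker F).subtype)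
          (fun z => qsnd z) with hp'def
      have hi' : Function.Injective i' := by
        intro x y hxy
        have : ((x.1 : A), (0 : B)) = ((y.1 : A), (0 : B)) := congrArg Subtype.val hxy
        exact Subtype.ext (congrArg Prod.fst this)
      have hp' : Function.Surjective p' := by
        intro y
        have h0 : g (h y.1) = 0 := by rw [hh']; exact y.2
        obtain ⟨a, ha⟩ := (hfg _).mp h0
        obtain ⟨x, hx⟩ := hp (-a)
        refine ⟨⟨(x, y.1), ?_⟩, Subtype.ext rfl⟩
        rw [memF]
        show f (p x) + h y.1 = 0
        rw [hx, map_neg, ha]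
        abel
      have hip : Function.Exact i' p' := by
        intro z
        constructor
        · intro hz
          have hz2 : (z.1 : A × B).2 = 0 := congrArg Subtype.val hz
          have hzF : f (p z.1.1) + h z.1.2 = 0 := (memF z.1).mp z.2
          rw [hz2] at hzF
          simp only [map_zero, add_zero] at hzF
          have hpz : p z.1.1 = 0 := hf (by rw [hzF, map_zero])
          refine ⟨⟨z.1.1, hpz⟩, ?_⟩
          refine Subtype.ext (Prod.ext rfl ?_)
          exact hz2.symm
        · rintro ⟨x, rfl⟩
          exact Subtype.ext rfl
      haveI : Module.Finite R ↥(LinearMap.ker p) := inferInstance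
      haveI : Module.Finite R ↥(LinearMap.ker q) := inferInstance
      haveI : Module.Finite R ↥(LinearMap.ker F) := inferInstance
      obtain ⟨SL, S, SN, i, pp, h1, h2, h3, s1, s2, s3⟩ :=
        ih (ModuleCat.of R ↥(LinearMap.ker p)) (ModuleCat.of R ↥(LinearMap.ker F))
          (ModuleCat.of R ↥(LinearMap.ker q)) i' p' hi' hp' hip
          (inferInstanceAs (Module.Finite R ↥(LinearMap.ker p)))
          (inferInstanceAs (Module.Finite R ↥(LinearMap.ker F)))
          (inferInstanceAs (Module.Finite R ↥(LinearMap.ker q)))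
      refine ⟨SL, S, SN, i, pp, h1, h2, h3, ?_, ?_, ?_⟩
      · exact isSyzygy_succ_iff.mpr ⟨ModuleCat.of R A, p,
          inferInstanceAs (Module.Finite R A),
          Module.Projective.of_equiv (ULift.moduleEquiv (R := R) (M := Fin k → R)).symm,
          hp, s1⟩
      · exact isSyzygy_succ_iff.mpr ⟨ModuleCat.of R (A × B), F,
          inferInstanceAs (Module.Finite R (A × B)), by
            haveI : Module.Projective R A :=
              Module.Projective.of_equiv (ULift.moduleEquiv (R := R) (M := Fin k → R)).symm
            haveI : Module.Projective R B :=
              Module.Projective.of_equiv (ULift.moduleEquiv (R := R) (M := Fin l → R)).symm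
            exact inferInstanceAs (Module.Projective R (A × B)),
          hF, s2⟩
      · exact isSyzygy_succ_iff.mpr ⟨ModuleCat.of R B, q,
          inferInstanceAs (Module.Finite R B),
          Module.Projective.of_equiv (ULift.moduleEquiv (R := R) (M := Fin l → R)).symm,
          hq, s3⟩

end Horseshoe

section Main
variable {R : Type} [CommRing R]

lemma closure_of_syzygies [IsNoetherianRing R] (SG : ModuleCat.{u} R)
    (hSGfin : Module.Finite R SG) (n : ℕ) {M : ModuleCat.{v} R} {S SM : ModuleCat.{u} R}
    (hM : Module.Finite R M) (hS : IsSyzygy R n S M) (hSM : IsSyzygy R n SM M)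
    (hC : ExtClosure.{u, u'} R (ModuleCat.of R (R × SG)) S) :
    ExtClosure.{u, u'} R (ModuleCat.of R (R × SG)) SM := by
  obtain ⟨P, Q, ⟨hPfin, hPproj⟩, ⟨hQfin, hQproj⟩, ⟨e⟩⟩ :=
    schanuel n (LinearEquiv.refl R M) hSM hS hM hM
  haveI := hPfin; haveI := hPproj; haveI := hQfin
  have hP' : ExtClosure.{u, u'} R (ModuleCat.of R (R × SG))
      (ModuleCat.of R (ULift.{u} P)) :=
    closure_projective SG hSGfin _ (Module.Finite.equiv ULift.moduleEquiv.symm)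
      (Module.Projective.of_equiv ULift.moduleEquiv.symm)
  have hprod := hC.prod hP'
  refine ExtClosure.summand_fg (N'' := (Q : Type)) hQfin ?_ hprod
  exact (LinearEquiv.prodCongr (LinearEquiv.refl R S) ULift.moduleEquiv).trans e.symm

lemma key [IsNoetherianRing R] (G : ModuleCat.{v} R) (hG : Module.Finite R G)
    (n : ℕ) (SG : ModuleCat.{u} R) (hSG : IsSyzygy R n SG G)
    {M : ModuleCat.{v} R} (hMG : ExtClosure.{v, w} R G M)
    (SM : ModuleCat.{u} R) (hSM : IsSyzygy R n SM M) :
    ExtClosure.{u, u'} R (ModuleCat.of R (R × SG)) SM := by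
  have hSGfin : Module.Finite R SG := IsSyzygy.finite n hSG hG
  induction hMG generalizing SM with
  | base =>
      exact closure_of_syzygies SG hSGfin n hG hSG hSM (closure_SG SG)
  | summand N N' e hsub ih =>
      haveI hMfin := ExtClosure.finite hsub hG
      have hN'fin : Module.Finite R N' :=
        Module.Finite.of_surjective ((LinearMap.snd R N N') ∘ₗ e.toLinearMap)
          (by rw [LinearMap.coe_comp, LinearEquiv.coe_coe]; exact (Prod.snd_surjective).comp e.surjective)
      obtain ⟨S', hS', hS'fin⟩ := (syzygy_exists n N' hN'fin :
        ∃ S' : ModuleCat.{u} R, IsSyzygy R n S' N' ∧ Module.Finite R S')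
      have hprod : IsSyzygy R n (ModuleCat.of R (SM × S')) _ :=
        IsSyzygy.congr n (IsSyzygy.prod n hSM hS') (LinearEquiv.refl R _) e.symm
      have hC := ih _ hprod
      exact ExtClosure.summand_fg (N'' := (S' : Type u)) hS'fin
        (LinearEquiv.refl R (SM × S' : Type u)) hC
  | extension f g hf hg hfg hL hN ihL ihN =>
      have hLfin := ExtClosure.finite hL hG
      have hNfin := ExtClosure.finite hN hG
      have hMfin := finite_of_exact f g hg hfg hLfin hNfin
      obtain ⟨SL, S, SN, i, pp, h1, h2, h3, s1, s2, s3⟩ :=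
        (horseshoe n _ _ _ f g hf hg hfg hLfin hMfin hNfin :
          ∃ (SL S SN : ModuleCat.{u} R) (i : SL →ₗ[R] S) (p : S →ₗ[R] SN),
            Function.Injective i ∧ Function.Surjective p ∧ Function.Exact i p ∧
            IsSyzygy R n SL _ ∧ IsSyzygy R n S _ ∧ IsSyzygy R n SN _)
      have hSC : ExtClosure.{u, u'} R (ModuleCat.of R (R × SG)) S :=
        ExtClosure.extension i pp h1 h2 h3 (ihL SL s1) (ihN SN s3)
      exact closure_of_syzygies SG hSGfin n hMfin s2 hSM hSC

end Main

/-- If `M` lies in the extension closure of `G` (both finitely generated over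
the commutative noetherian ring `R`) and `n ≥ 0`, then any `n`-th syzygy of `M` lies in the
extension closure of `R ⊕ Ωⁿ G`, for any `n`-th syzygy `Ωⁿ G` of `G`. -/
theorem stmt_6 (R : Type) [CommRing R] [IsNoetherianRing R]
    (G M : ModuleCat R) [Module.Finite R G] [Module.Finite R M]
    (hMG : ExtClosure R G M) (n : ℕ) (SG SM : ModuleCat R)
    (hSG : IsSyzygy R n SG G) (hSM : IsSyzygy R n SM M) :
    ExtClosure R (ModuleCat.of R (R × SG)) SM :=
  key G ‹_› n SG hSG hMG SM hSM
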